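/- Let ρ be an m×n bipartite state and t ≥ 0 minimal such that (ρ + tσ)/(1+t) is absolutely separable for some state σ (t = AR(ρ), the robustness of nonabsolute separability). Then AR is convex: for states ρ₁, ρ₂ and p ∈ (0,1), AR(pρ₁ + (1−p)ρ₂) ≤ p·AR(ρ₁) + (1−p)·AR(ρ₂). -/

import Mathlib

open scoped ComplexOrder

/-- A quantum state: a positive semidefinite matrix with unit trace. -/
def IsState {d : Type*} [Fintype d] [DecidableEq d] (ρ : Matrix d d ℂ) : Prop :=
  ρ.PosSemidef ∧ ρ.trace = 1

/-- Separability of a bipartite state on `ℂ^m ⊗ ℂ^n`: a convex combination of product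
states. -/
def SepState {m n : ℕ} (ρ : Matrix (Fin m × Fin n) (Fin m × Fin n) ℂ) : Prop :=
  ∃ (k : ℕ) (p : Fin k → ℝ) (A : Fin k → Matrix (Fin m) (Fin m) ℂ)
    (B : Fin k → Matrix (Fin n) (Fin n) ℂ),
    (∀ i, 0 ≤ p i) ∧ (∑ i, p i = 1) ∧
    (∀ i, (A i).PosSemidef ∧ (A i).trace = 1 ∧ (B i).PosSemidef ∧ (B i).trace = 1) ∧
    ρ = ∑ i, (p i : ℂ) • Matrix.kroneckerMap (· * ·) (A i) (B i)

/-- Absolute separability: the state remains separable under every global unitary. -/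
def IsAbsSep {m n : ℕ} (ρ : Matrix (Fin m × Fin n) (Fin m × Fin n) ℂ) : Prop :=
  ∀ U ∈ Matrix.unitaryGroup (Fin m × Fin n) ℂ,
    SepState (U * ρ * star U)

/-- The robustness of nonabsolute separability: the minimal `t ≥ 0` such that mixing `ρ`
with some state `σ` in ratio `1 : t` yields an absolutely separable state. -/
noncomputable def AR {m n : ℕ} (ρ : Matrix (Fin m × Fin n) (Fin m × Fin n) ℂ) : ℝ :=
  sInf {t : ℝ | 0 ≤ t ∧ ∃ σ : Matrix (Fin m × Fin n) (Fin m × Fin n) ℂ,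
    IsState σ ∧ IsAbsSep ((((1 / (1 + t) : ℝ)) : ℂ) • (ρ + (t : ℂ) • σ))}

open Matrix

/-! ### Auxiliary lemmas -/

lemma psd_real_smul {d : Type*} [Fintype d] [DecidableEq d] {A : Matrix d d ℂ}
    (hA : A.PosSemidef) {c : ℝ} (hc : 0 ≤ c) : ((c:ℂ) • A).PosSemidef := by
  constructor
  · unfold Matrix.IsHermitian
    rw [conjTranspose_smul, hA.1.eq]
    simp
  · intro x
    exact (hA.smul (Complex.zero_le_real.2 hc)).2 x

lemma sepState_convex {m n : ℕ} {X Y : Matrix (Fin m × Fin n) (Fin m × Fin n) ℂ}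
    (hX : SepState X) (hY : SepState Y) {a b : ℝ} (ha : 0 ≤ a) (hb : 0 ≤ b)
    (hab : a + b = 1) : SepState ((a:ℂ) • X + (b:ℂ) • Y) := by
  obtain ⟨k₁, p₁, A₁, B₁, hp₁, hs₁, hst₁, hd₁⟩ := hX
  obtain ⟨k₂, p₂, A₂, B₂, hp₂, hs₂, hst₂, hd₂⟩ := hY
  refine ⟨k₁ + k₂, Fin.append (fun i => a * p₁ i) (fun i => b * p₂ i),
    Fin.append A₁ A₂, Fin.append B₁ B₂, ?_, ?_, ?_, ?_⟩
  · intro i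
    induction i using Fin.addCases with
    | left i => rw [Fin.append_left]; exact mul_nonneg ha (hp₁ i)
    | right i => rw [Fin.append_right]; exact mul_nonneg hb (hp₂ i)
  · rw [Fin.sum_univ_add]
    simp only [Fin.append_left, Fin.append_right, ← Finset.mul_sum, hs₁, hs₂]
    simpa using hab
  · intro i
    induction i using Fin.addCases with
    | left i => simp only [Fin.append_left]; exact hst₁ i
    | right i => simp only [Fin.append_right]; exact hst₂ i
  · rw [Fin.sum_univ_add]
    simp only [Fin.append_left, Fin.append_right]
    rw [hd₁, hd₂, Finset.smul_sum, Finset.smul_sum]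
    congr 1 <;> {
      refine Finset.sum_congr rfl fun i _ => ?_
      rw [smul_smul]
      push_cast
      ring_nf }

lemma isAbsSep_convex {m n : ℕ} {X Y : Matrix (Fin m × Fin n) (Fin m × Fin n) ℂ}
    (hX : IsAbsSep X) (hY : IsAbsSep Y) {a b : ℝ} (ha : 0 ≤ a) (hb : 0 ≤ b)
    (hab : a + b = 1) : IsAbsSep ((a:ℂ) • X + (b:ℂ) • Y) := by
  intro U hU
  have : U * ((a:ℂ) • X + (b:ℂ) • Y) * star U
      = (a:ℂ) • (U * X * star U) + (b:ℂ) • (U * Y * star U) := by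
    rw [Matrix.mul_add, Matrix.add_mul, Matrix.mul_smul, Matrix.mul_smul,
      Matrix.smul_mul, Matrix.smul_mul]
  rw [this]
  exact sepState_convex (hX U hU) (hY U hU) ha hb hab

lemma sep_maxmixed {m n : ℕ} (hm : 0 < m) (hn : 0 < n) :
    SepState ((((m*n : ℝ)⁻¹ : ℝ) : ℂ) • (1 : Matrix (Fin m × Fin n) (Fin m × Fin n) ℂ)) := by
  refine ⟨m * n, fun _ => (m*n : ℝ)⁻¹,
    fun c => Matrix.diagonal (fun x => if x = (finProdFinEquiv.symm c).1 then 1 else 0),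
    fun c => Matrix.diagonal (fun x => if x = (finProdFinEquiv.symm c).2 then 1 else 0),
    ?_, ?_, ?_, ?_⟩
  · intro _; positivity
  · rw [Finset.sum_const, Finset.card_univ, Fintype.card_fin, nsmul_eq_mul]
    push_cast
    rw [mul_inv_cancel₀]
    positivity
  · intro c
    refine ⟨Matrix.posSemidef_diagonal_iff.2 fun i => ?_, ?_,
      Matrix.posSemidef_diagonal_iff.2 fun i => ?_, ?_⟩
    · split <;> simp
    · rw [Matrix.trace_diagonal]; simp
    · split <;> simp
    · rw [Matrix.trace_diagonal]; simp
  · have key : ∑ c : Fin (m*n),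
        Matrix.kroneckerMap (· * ·)
          (Matrix.diagonal (fun x => if x = (finProdFinEquiv.symm c).1 then (1:ℂ) else 0))
          (Matrix.diagonal (fun x => if x = (finProdFinEquiv.symm c).2 then (1:ℂ) else 0))
        = (1 : Matrix (Fin m × Fin n) (Fin m × Fin n) ℂ) := by
      rw [← Equiv.sum_comp finProdFinEquiv]
      ext ⟨i, j⟩ ⟨k, l⟩
      rw [Matrix.sum_apply]
      simp only [Equiv.symm_apply_apply, Matrix.kroneckerMap_apply, Matrix.diagonal_apply,
        Matrix.one_apply, Fintype.sum_prod_type]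
      by_cases hik : i = k <;> by_cases hjl : j = l <;>
        simp [hik, hjl, Prod.ext_iff, Finset.sum_ite_eq, mul_ite, ite_mul]
    rw [← Finset.smul_sum, key]

lemma absSep_maxmixed {m n : ℕ} (hm : 0 < m) (hn : 0 < n) :
    IsAbsSep ((((m*n : ℝ)⁻¹ : ℝ) : ℂ) • (1 : Matrix (Fin m × Fin n) (Fin m × Fin n) ℂ)) := by
  intro U hU
  have h1 : U * ((((m*n : ℝ)⁻¹ : ℝ) : ℂ) • 1) * star U
      = (((m*n : ℝ)⁻¹ : ℝ) : ℂ) • (1 : Matrix (Fin m × Fin n) (Fin m × Fin n) ℂ) := by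
    rw [Matrix.mul_smul, Matrix.smul_mul, Matrix.mul_one,
      (Matrix.mem_unitaryGroup_iff).mp hU]
  rw [h1]
  exact sep_maxmixed hm hn

lemma two_smul_one_sub_psd {d : Type*} [Fintype d] [DecidableEq d]
    {ρ : Matrix d d ℂ} (h : ρ.PosSemidef) (ht : ρ.trace = 1) :
    ((2:ℂ) • 1 - ρ).PosSemidef := by
  have hH := h.1
  have hspec := hH.spectral_theorem
  rw [Unitary.conjStarAlgAut_apply] at hspec
  set V : Matrix d d ℂ := (hH.eigenvectorUnitary : Matrix d d ℂ) with hV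
  have hmem : V ∈ Matrix.unitaryGroup d ℂ := SetLike.coe_mem _
  have hVV : V * star V = 1 := Matrix.mem_unitaryGroup_iff.mp hmem
  have hsVV : star V * V = 1 := Matrix.mem_unitaryGroup_iff'.mp hmem
  have htr : ∑ i, hH.eigenvalues i = 1 := by
    have h2 : ρ.trace = ∑ i, (hH.eigenvalues i : ℂ) := by
      conv_lhs => rw [hspec]
      rw [Matrix.trace_mul_cycle, hsVV, Matrix.one_mul, Matrix.trace_diagonal]
      simp
    rw [ht] at h2
    exact_mod_cast congrArg Complex.re h2.symm
  have hle : ∀ i, hH.eigenvalues i ≤ 1 := by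
    intro i
    calc hH.eigenvalues i ≤ ∑ j, hH.eigenvalues j :=
          Finset.single_le_sum (fun j _ => h.eigenvalues_nonneg j) (Finset.mem_univ i)
      _ = 1 := htr
  have hd : ((2:ℂ) • 1 - Matrix.diagonal (RCLike.ofReal ∘ hH.eigenvalues) : Matrix d d ℂ)
      = Matrix.diagonal (fun i => (2:ℂ) - (hH.eigenvalues i : ℂ)) := by
    ext i j
    by_cases hij : i = j <;>
      simp [Matrix.diagonal_apply, Matrix.one_apply, Matrix.sub_apply, hij, RCLike.ofReal]
  have key : (2:ℂ) • 1 - ρ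
      = V * Matrix.diagonal (fun i => (2:ℂ) - (hH.eigenvalues i : ℂ)) * star V := by
    rw [← hd, Matrix.mul_sub, Matrix.sub_mul, Matrix.mul_smul, Matrix.smul_mul,
      Matrix.mul_one, hVV, ← hspec]
  rw [key, Matrix.star_eq_conjTranspose]
  refine (Matrix.posSemidef_diagonal_iff.mpr fun i => ?_).mul_mul_conjTranspose_same V
  have he : ((2 - hH.eigenvalues i : ℝ) : ℂ) = (2:ℂ) - (hH.eigenvalues i : ℂ) := by
    push_cast; ring
  rw [← he]
  exact Complex.zero_le_real.2 (by linarith [hle i])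

lemma witness_mem {m n : ℕ} (hm : 0 < m) (hn : 0 < n)
    {ρ : Matrix (Fin m × Fin n) (Fin m × Fin n) ℂ} (h : IsState ρ) :
    (2*(m*n) - 1 : ℝ) ∈ {t : ℝ | 0 ≤ t ∧ ∃ σ : Matrix (Fin m × Fin n) (Fin m × Fin n) ℂ,
      IsState σ ∧ IsAbsSep ((((1 / (1 + t) : ℝ)) : ℂ) • (ρ + (t : ℂ) • σ))} := by
  have hmn : (1:ℝ) ≤ (m*n : ℝ) := by
    have h0 := Nat.one_le_iff_ne_zero.mpr (Nat.mul_ne_zero hm.ne' hn.ne')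
    exact_mod_cast h0
  set t : ℝ := 2*(m*n) - 1 with htdef
  have ht0 : 0 < t := by dsimp [t]; linarith
  have htne : (t:ℂ) ≠ 0 := by exact_mod_cast Complex.ofReal_ne_zero.mpr ht0.ne'
  refine ⟨ht0.le, ((t⁻¹ : ℝ) : ℂ) • ((2:ℂ) • 1 - ρ), ⟨?_, ?_⟩, ?_⟩
  · exact psd_real_smul (two_smul_one_sub_psd h.1 h.2) (inv_nonneg.2 ht0.le)
  · rw [Matrix.trace_smul, Matrix.trace_sub, Matrix.trace_smul, Matrix.trace_one, h.2]
    simp only [smul_eq_mul]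
    have hcard : (Fintype.card (Fin m × Fin n) : ℂ) = (m*n : ℕ) := by simp
    rw [hcard]
    have : ((t⁻¹ : ℝ) : ℂ) = (t:ℂ)⁻¹ := by push_cast; ring
    rw [this]
    field_simp [htne]
    dsimp [t]
    push_cast
    ring
  · have hmat : (((1 / (1 + t) : ℝ)) : ℂ) • (ρ + (t : ℂ) • (((t⁻¹ : ℝ) : ℂ) • ((2:ℂ) • 1 - ρ)))
        = (((m*n : ℝ)⁻¹ : ℝ) : ℂ) • (1 : Matrix (Fin m × Fin n) (Fin m × Fin n) ℂ) := by
      have h1t : (1:ℝ) + t = 2*(m*n) := by dsimp [t]; ring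
      have hmnne : ((m:ℂ)*(n:ℂ)) ≠ 0 := by
        have : ((m*n : ℝ) : ℂ) ≠ 0 := Complex.ofReal_ne_zero.mpr (by linarith)
        push_cast at this; exact_mod_cast this
      have h2ne : 2*((m:ℂ)*(n:ℂ)) - 1 ≠ 0 := by
        have : ((2*((m:ℝ)*(n:ℝ)) - 1 : ℝ) : ℂ) ≠ 0 := Complex.ofReal_ne_zero.mpr (by linarith)
        push_cast at this
        convert this using 2
      have h2ne' : (2*(m:ℂ)*n - 1) ≠ 0 := by rwa [mul_assoc]
      rw [h1t]
      match_scalars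
      · push_cast [htdef]
        field_simp [h2ne]
        ring
      · push_cast [htdef]
        field_simp [h2ne]
    rw [hmat]
    exact absSep_maxmixed hm hn

lemma mem_combine {m n : ℕ} {ρ₁ ρ₂ : Matrix (Fin m × Fin n) (Fin m × Fin n) ℂ}
    {p : ℝ} (hp0 : 0 < p) (hp1 : p < 1) {t₁ t₂ : ℝ}
    (h1 : t₁ ∈ {t : ℝ | 0 ≤ t ∧ ∃ σ, IsState σ ∧
      IsAbsSep ((((1 / (1 + t) : ℝ)) : ℂ) • (ρ₁ + (t : ℂ) • σ))})
    (h2 : t₂ ∈ {t : ℝ | 0 ≤ t ∧ ∃ σ, IsState σ ∧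
      IsAbsSep ((((1 / (1 + t) : ℝ)) : ℂ) • (ρ₂ + (t : ℂ) • σ))}) :
    p*t₁ + (1-p)*t₂ ∈ {t : ℝ | 0 ≤ t ∧ ∃ σ, IsState σ ∧
      IsAbsSep ((((1 / (1 + t) : ℝ)) : ℂ) •
        (((p : ℂ) • ρ₁ + (((1 - p : ℝ)) : ℂ) • ρ₂) + (t : ℂ) • σ))} := by
  obtain ⟨ht₁0, σ₁, hσ₁, hA₁⟩ := h1
  obtain ⟨ht₂0, σ₂, hσ₂, hA₂⟩ := h2
  have hp1' : (0:ℝ) < 1 - p := by linarith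
  have ht0 : 0 ≤ p*t₁ + (1-p)*t₂ :=
    add_nonneg (mul_nonneg hp0.le ht₁0) (mul_nonneg hp1'.le ht₂0)
  have zero_mix : ∀ X Y : Matrix (Fin m × Fin n) (Fin m × Fin n) ℂ,
      (((1 / (1 + (0:ℝ)) : ℝ)) : ℂ) • (X + (((0:ℝ)) : ℂ) • Y) = X := by
    intro X Y; norm_num
  rcases eq_or_lt_of_le ht0 with ht|ht
  · -- t = 0, so t₁ = t₂ = 0
    have ht₁ : t₁ = 0 := by nlinarith
    have ht₂ : t₂ = 0 := by nlinarith
    rw [ht₁] at hA₁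
    rw [ht₂] at hA₂
    rw [zero_mix ρ₁ σ₁] at hA₁
    rw [zero_mix ρ₂ σ₂] at hA₂
    refine ⟨ht0, σ₁, hσ₁, ?_⟩
    rw [show p*t₁ + (1-p)*t₂ = 0 by rw [ht₁, ht₂]; ring, zero_mix]
    exact isAbsSep_convex hA₁ hA₂ hp0.le hp1'.le (by ring)
  · set t : ℝ := p*t₁ + (1-p)*t₂ with htdef
    have htne : (t:ℂ) ≠ 0 := Complex.ofReal_ne_zero.mpr ht.ne'
    have c1 : (1:ℂ) + (t₁:ℂ) ≠ 0 := by
      have : ((1 + t₁ : ℝ):ℂ) ≠ 0 := Complex.ofReal_ne_zero.mpr (by linarith)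
      push_cast at this; exact this
    have c2 : (1:ℂ) + (t₂:ℂ) ≠ 0 := by
      have : ((1 + t₂ : ℝ):ℂ) ≠ 0 := Complex.ofReal_ne_zero.mpr (by linarith)
      push_cast at this; exact this
    have cT : (1:ℂ) + (t:ℂ) ≠ 0 := by
      have : ((1 + t : ℝ):ℂ) ≠ 0 := Complex.ofReal_ne_zero.mpr (by linarith)
      push_cast at this; exact this
    refine ⟨ht.le, ((t⁻¹ : ℝ) : ℂ) •
      (((p*t₁ : ℝ):ℂ) • σ₁ + (((1-p)*t₂ : ℝ):ℂ) • σ₂), ⟨?_, ?_⟩, ?_⟩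
    · exact psd_real_smul
        ((psd_real_smul hσ₁.1 (mul_nonneg hp0.le ht₁0)).add
          (psd_real_smul hσ₂.1 (mul_nonneg hp1'.le ht₂0)))
        (inv_nonneg.2 ht.le)
    · rw [Matrix.trace_smul, Matrix.trace_add, Matrix.trace_smul, Matrix.trace_smul,
        hσ₁.2, hσ₂.2]
      have hreal : t⁻¹ * (p*t₁ + (1-p)*t₂) = 1 := by field_simp; exact htdef.symm
      have := congrArg (fun x : ℝ => (x : ℂ)) hreal
      push_cast at this ⊢
      simpa using this
    · have ha : 0 ≤ p*(1+t₁)/(1+t) := by positivity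
      have hb : 0 ≤ (1-p)*(1+t₂)/(1+t) := by positivity
      have hab : p*(1+t₁)/(1+t) + (1-p)*(1+t₂)/(1+t) = 1 := by
        field_simp
        ring
      have hmat : (((1 / (1 + t) : ℝ)) : ℂ) •
            (((p : ℂ) • ρ₁ + (((1 - p : ℝ)) : ℂ) • ρ₂) + (t : ℂ) •
              (((t⁻¹ : ℝ) : ℂ) • (((p*t₁ : ℝ):ℂ) • σ₁ + (((1-p)*t₂ : ℝ):ℂ) • σ₂)))
          = ((p*(1+t₁)/(1+t) : ℝ) : ℂ) • ((((1 / (1 + t₁) : ℝ)) : ℂ) • (ρ₁ + (t₁ : ℂ) • σ₁))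
            + (((1-p)*(1+t₂)/(1+t) : ℝ) : ℂ) •
              ((((1 / (1 + t₂) : ℝ)) : ℂ) • (ρ₂ + (t₂ : ℂ) • σ₂)) := by
        match_scalars <;> push_cast <;> field_simp <;> ring
      rw [hmat]
      exact isAbsSep_convex hA₁ hA₂ ha hb hab

/-- The robustness of nonabsolute separability is convex:
`AR(pρ₁ + (1−p)ρ₂) ≤ p·AR(ρ₁) + (1−p)·AR(ρ₂)`. -/
theorem AR_convex {m n : ℕ} (ρ₁ ρ₂ : Matrix (Fin m × Fin n) (Fin m × Fin n) ℂ)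
    (h₁ : IsState ρ₁) (h₂ : IsState ρ₂) (p : ℝ) (hp0 : 0 < p) (hp1 : p < 1) :
    AR (((p : ℂ)) • ρ₁ + (((1 - p : ℝ)) : ℂ) • ρ₂) ≤ p * AR ρ₁ + (1 - p) * AR ρ₂ := by
  rcases Nat.eq_zero_or_pos m with hm|hm
  · exfalso
    subst hm
    have := h₁.2
    rw [Matrix.trace] at this
    simp at this
  rcases Nat.eq_zero_or_pos n with hn|hn
  · exfalso
    subst hn
    have := h₂.2
    rw [Matrix.trace] at this
    simp at this
  set S₁ := {t : ℝ | 0 ≤ t ∧ ∃ σ, IsState σ ∧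
    IsAbsSep ((((1 / (1 + t) : ℝ)) : ℂ) • (ρ₁ + (t : ℂ) • σ))} with hS₁
  set S₂ := {t : ℝ | 0 ≤ t ∧ ∃ σ, IsState σ ∧
    IsAbsSep ((((1 / (1 + t) : ℝ)) : ℂ) • (ρ₂ + (t : ℂ) • σ))} with hS₂
  set S₀ := {t : ℝ | 0 ≤ t ∧ ∃ σ, IsState σ ∧
    IsAbsSep ((((1 / (1 + t) : ℝ)) : ℂ) •
      (((p : ℂ) • ρ₁ + (((1 - p : ℝ)) : ℂ) • ρ₂) + (t : ℂ) • σ))} with hS₀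
  have hb₀ : BddBelow S₀ := ⟨0, fun t ht => ht.1⟩
  have hne₁ : S₁.Nonempty := ⟨_, witness_mem hm hn h₁⟩
  have hne₂ : S₂.Nonempty := ⟨_, witness_mem hm hn h₂⟩
  have hAR : AR (((p : ℂ)) • ρ₁ + (((1 - p : ℝ)) : ℂ) • ρ₂) = sInf S₀ := rfl
  have hAR₁ : AR ρ₁ = sInf S₁ := rfl
  have hAR₂ : AR ρ₂ = sInf S₂ := rfl
  rw [hAR, hAR₁, hAR₂]
  refine le_of_forall_pos_le_add fun ε hε => ?_
  obtain ⟨t₁, ht₁, hlt₁⟩ := Real.lt_sInf_add_pos hne₁ hε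
  obtain ⟨t₂, ht₂, hlt₂⟩ := Real.lt_sInf_add_pos hne₂ hε
  have hmem : p*t₁ + (1-p)*t₂ ∈ S₀ := mem_combine hp0 hp1 ht₁ ht₂
  have hle : sInf S₀ ≤ p*t₁ + (1-p)*t₂ := csInf_le hb₀ hmem
  have e₁ := mul_lt_mul_of_pos_left hlt₁ hp0
  have e₂ := mul_lt_mul_of_pos_left hlt₂ (by linarith : (0:ℝ) < 1 - p)
  nlinarith
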